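/- arXiv:2004.06032 — 3 statements merged into one kernel-verified Lean document; each statement's English description precedes it below -/
import Mathlib

section
/- Let x and y be binary words of length n ≥ 4 that are Type-B-confusable, and suppose D_1(x) ∩ D_1(y) = {z} is a singleton. Then there exists a set T of binary words of length n−2 with |T| ≤ 2 such that D_2(x) ∩ D_2(y) = D_1(z) ∪ T. -/
/-- The `t`-deletion ball of a binary word `x`: all subsequences of `x`
of length `|x| - t` (empty when `t > |x|`). -/
def deletionBall (t : ℕ) (x : List Bool) : Set (List Bool) :=
  {z | z.Sublist x ∧ z.length + t = x.length}

/-- One-sided Type-B confusability: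
`x = u·a·ā·v·b·w` and `y = u·ā·v·b·b̄·w`. -/
def TypeBOne (x y : List Bool) : Prop :=
  ∃ (u v w : List Bool) (a b : Bool),
    x = u ++ a :: (!a) :: v ++ b :: w ∧ y = u ++ (!a) :: v ++ b :: (!b) :: w

/-- `x` and `y` are Type-B-confusable (possibly after swapping `x` and `y`). -/
def TypeBConfusable (x y : List Bool) : Prop := TypeBOne x y ∨ TypeBOne y x

open List

/-- Splitting a sublist of a concat. -/
lemma sublist_concat_iff' {s X : List Bool} {d : Bool} :
    s <+ X ++ [d] ↔ s <+ X ∨ ∃ s', s = s' ++ [d] ∧ s' <+ X := by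
  constructor
  · intro h
    rcases List.sublist_append_iff.1 h with ⟨r₁, r₂, rfl, h₁, h₂⟩
    rcases List.sublist_singleton.1 h₂ with rfl | rfl
    · exact Or.inl (by simpa using h₁)
    · exact Or.inr ⟨r₁, rfl, h₁⟩
  · rintro (h | ⟨s', rfl, h⟩)
    · exact h.trans (List.sublist_append_left _ _)
    · exact (List.append_sublist_append_right _).2 h

/-- Classic: two distinct words of the same length have at most two common
subsequences of colength 1. -/
lemma d1d1 : ∀ (A B : List Bool), A.length = B.length → A ≠ B →
    ∃ t₁ t₂, ∀ s, s <+ A → s <+ B → s.length + 1 = A.length → s = t₁ ∨ s = t₂ := by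
  intro A
  induction A with
  | nil =>
    intro B hlen hne
    exact absurd (List.eq_nil_of_length_eq_zero hlen.symm).symm hne
  | cons a₀ A' ih =>
    intro B hlen hne
    cases B with
    | nil => simp at hlen
    | cons b₀ B' =>
      simp only [List.length_cons] at hlen
      by_cases hab : a₀ = b₀
      · subst hab
        have hne' : A' ≠ B' := fun h => hne (by rw [h])
        obtain ⟨t₁, t₂, ht⟩ := ih B' (by omega) hne'
        refine ⟨a₀ :: t₁, a₀ :: t₂, ?_⟩
        intro s hsA hsB hl
        simp only [List.length_cons] at hl
        rcases List.sublist_cons_iff.1 hsA with hsA' | ⟨s₀, rfl, hs₀⟩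
        · -- s <+ A', so s = A' by length
          have hseq : s = A' := hsA'.eq_of_length (by omega)
          rcases List.sublist_cons_iff.1 hsB with hsB' | ⟨r, hr, hrB⟩
          · exact absurd (hseq ▸ hsB'.eq_of_length (by omega) : A' = B') hne'
          · -- s = a₀ :: r, r <+ B'
            have hrA : r <+ A' := by
              rw [← hseq, hr]; exact List.sublist_cons_self _ _
            have hsr : s.length = r.length + 1 := by rw [hr]; simp
            rcases ht r hrA hrB (by omega) with h1 | h1
            · exact Or.inl (by rw [hr, h1])
            · exact Or.inr (by rw [hr, h1])
        · have hs₀B : s₀ <+ B' := List.cons_sublist_cons.1 hsB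
          simp only [List.length_cons] at hl
          rcases ht s₀ hs₀ hs₀B (by omega) with h1 | h1
          · exact Or.inl (by rw [h1])
          · exact Or.inr (by rw [h1])
      · refine ⟨A', B', ?_⟩
        intro s hsA hsB hl
        simp only [List.length_cons] at hl
        rcases List.sublist_cons_iff.1 hsA with hsA' | ⟨s₀, rfl, hs₀⟩
        · exact Or.inl (hsA'.eq_of_length (by omega))
        · rcases List.sublist_cons_iff.1 hsB with hsB' | ⟨r, hr, hrB⟩
          · exact Or.inr (hsB'.eq_of_length (by simp only [List.length_cons] at hl ⊢; omega))
          · exact absurd (by injection hr) hab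

/-- The core case: no common prefix/suffix. -/
lemma exc_core (K : List Bool) (m₀ m₁ a c : Bool) (hm₀ : m₀ ≠ a) (hm₁ : m₁ ≠ c)
    (hz : ∀ t, t <+ a :: m₀ :: K ++ [m₁] → t <+ (m₀ :: K ++ [m₁]) ++ [c] →
      t.length + 1 = K.length + 3 → t = m₀ :: K ++ [m₁]) :
    ∃ t₁ t₂, ∀ s, s <+ a :: m₀ :: K ++ [m₁] → s <+ (m₀ :: K ++ [m₁]) ++ [c] →
      s.length + 2 = K.length + 3 → ¬ s <+ m₀ :: K ++ [m₁] → s = t₁ ∨ s = t₂ := by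
  have hlenAB : (a :: m₀ :: K).length = ((K ++ [m₁]) ++ [c]).length := by simp
  have hAB : (a :: m₀ :: K) ≠ ((K ++ [m₁]) ++ [c]) := by
    intro h
    have hAx : (a :: m₀ :: K) <+ a :: m₀ :: K ++ [m₁] := by
      have h2 : a :: m₀ :: K ++ [m₁] = (a :: m₀ :: K) ++ [m₁] := by simp
      rw [h2]
      exact List.sublist_append_left _ _
    have hAy : (a :: m₀ :: K) <+ (m₀ :: K ++ [m₁]) ++ [c] := by
      rw [h]
      exact (List.append_sublist_append_right _).2 (List.sublist_cons_self _ _)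
    have := hz _ hAx hAy (by simp)
    have : a = m₀ := by injection this
    exact hm₀ this.symm
  obtain ⟨t₁, t₂, ht⟩ := d1d1 _ _ hlenAB hAB
  refine ⟨t₁, t₂, ?_⟩
  intro s hsx hsy hsl hns
  -- decompose s from the x side
  rcases List.sublist_cons_iff.1 hsx with h | ⟨g, rfl, hg⟩
  · exact absurd h hns
  -- decompose from the y side
  rcases sublist_concat_iff'.1 hsy with h | ⟨h', hh', hhsub⟩
  · exact absurd h hns
  -- a :: g = h' ++ [c]
  cases h' with
  | nil =>
    -- then s = [c] = [a], g = []
    simp only [List.nil_append] at hh'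
    have hac : a = c := by injection hh'
    have hgnil : g = [] := by injection hh'
    subst hgnil
    have hsA : [a] <+ a :: m₀ :: K := List.cons_sublist_cons.2 (List.nil_sublist _)
    have hsB : [a] <+ (K ++ [m₁]) ++ [c] := by
      rw [hac]
      exact List.sublist_append_right _ _
    rcases ht _ hsA hsB (by simp only [List.length_cons] at hsl ⊢; omega) with h1 | h1
    · exact Or.inl h1
    · exact Or.inr h1
  | cons e h'' =>
    have hae : a = e := by injection hh'
    have hgeq : g = h'' ++ [c] := by injection hh'
    subst hae
    have hsA : a :: g <+ a :: m₀ :: K := by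
      refine List.cons_sublist_cons.2 ?_
      have hg' : g <+ (m₀ :: K) ++ [m₁] := by simpa using hg
      rcases sublist_concat_iff'.1 hg' with h | ⟨g', hgg, _⟩
      · exact h
      · exfalso
        apply hm₁
        have h1 : (g' ++ [m₁]).getLast? = some m₁ := List.getLast?_concat
        have h2 : (h'' ++ [c]).getLast? = some c := List.getLast?_concat
        rw [← hgg, hgeq, h2] at h1
        injection h1 with h1
        exact h1.symm
    have hsB : a :: g <+ (K ++ [m₁]) ++ [c] := by
      rw [hh']
      refine (List.append_sublist_append_right _).2 ?_
      rcases List.sublist_cons_iff.1 hhsub with h | ⟨h₃, hh₃, _⟩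
      · exact h
      · exfalso
        apply hm₀
        injection hh₃ with hh₃
        exact hh₃.symm
    rcases ht _ hsA hsB (by simp only [List.length_cons] at hsl ⊢; omega) with h1 | h1
    · exact Or.inl h1
    · exact Or.inr h1

/-- Stripping a common first letter. -/
lemma strip_cons (d : Bool) (X Y Z : List Bool)
    (H : (∀ t, t <+ X → t <+ Y → t.length + 1 = X.length → t = Z) →
      ∃ t₁ t₂, ∀ s, s <+ X → s <+ Y → s.length + 2 = X.length → ¬ s <+ Z →
        s = t₁ ∨ s = t₂)
    (hz : ∀ t, t <+ d :: X → t <+ d :: Y → t.length + 1 = (d :: X).length → t = d :: Z) :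
    ∃ t₁ t₂, ∀ s, s <+ d :: X → s <+ d :: Y → s.length + 2 = (d :: X).length →
      ¬ s <+ d :: Z → s = t₁ ∨ s = t₂ := by
  have hz' : ∀ t, t <+ X → t <+ Y → t.length + 1 = X.length → t = Z := by
    intro t htX htY htl
    have := hz (d :: t) (List.cons_sublist_cons.2 htX) (List.cons_sublist_cons.2 htY)
      (by simp only [List.length_cons]; omega)
    injection this
  obtain ⟨t₁, t₂, ht⟩ := H hz'
  refine ⟨d :: t₁, d :: t₂, ?_⟩
  intro s hsX hsY hsl hns
  simp only [List.length_cons] at hsl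
  have key : ∃ s₀, s = d :: s₀ ∧ s₀ <+ X ∧ s₀ <+ Y := by
    rcases List.sublist_cons_iff.1 hsX with hX' | ⟨s₀, rfl, hs₀⟩
    · rcases List.sublist_cons_iff.1 hsY with hY' | ⟨s₀, hs₀eq, hs₀⟩
      · -- s avoids d on both sides: d :: s is a common colength-1 subsequence
        exfalso
        have := hz (d :: s) (List.cons_sublist_cons.2 hX') (List.cons_sublist_cons.2 hY')
          (by simp only [List.length_cons]; omega)
        have hsZ : s = Z := by injection this
        exact hns (hsZ ▸ List.sublist_cons_self _ _)
      · refine ⟨s₀, hs₀eq, ?_, hs₀⟩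
        have : s₀ <+ s := hs₀eq ▸ List.sublist_cons_self _ _
        exact this.trans hX'
    · rcases List.sublist_cons_iff.1 hsY with hY' | ⟨r, hreq, hr⟩
      · exact ⟨s₀, rfl, hs₀, (List.sublist_cons_self _ _).trans hY'⟩
      · have : s₀ = r := by injection hreq
        exact ⟨s₀, rfl, hs₀, this ▸ hr⟩
  obtain ⟨s₀, rfl, hs₀X, hs₀Y⟩ := key
  have hns₀ : ¬ s₀ <+ Z := fun h => hns (List.cons_sublist_cons.2 h)
  have hl₀ : s₀.length + 2 = X.length := by
    simp only [List.length_cons] at hsl; omega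
  rcases ht s₀ hs₀X hs₀Y hl₀ hns₀ with h | h
  · exact Or.inl (by rw [h])
  · exact Or.inr (by rw [h])

/-- Stripping a common last letter. -/
lemma strip_concat (d : Bool) (X Y Z : List Bool)
    (H : (∀ t, t <+ X → t <+ Y → t.length + 1 = X.length → t = Z) →
      ∃ t₁ t₂, ∀ s, s <+ X → s <+ Y → s.length + 2 = X.length → ¬ s <+ Z →
        s = t₁ ∨ s = t₂)
    (hz : ∀ t, t <+ X ++ [d] → t <+ Y ++ [d] → t.length + 1 = (X ++ [d]).length →
      t = Z ++ [d]) :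
    ∃ t₁ t₂, ∀ s, s <+ X ++ [d] → s <+ Y ++ [d] → s.length + 2 = (X ++ [d]).length →
      ¬ s <+ Z ++ [d] → s = t₁ ∨ s = t₂ := by
  have hz' : ∀ t, t <+ X → t <+ Y → t.length + 1 = X.length → t = Z := by
    intro t htX htY htl
    have := hz (t ++ [d]) ((List.append_sublist_append_right _).2 htX)
      ((List.append_sublist_append_right _).2 htY)
      (by simp only [List.length_append, List.length_cons, List.length_nil]; omega)
    exact List.append_cancel_right this
  obtain ⟨t₁, t₂, ht⟩ := H hz'
  refine ⟨t₁ ++ [d], t₂ ++ [d], ?_⟩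
  intro s hsX hsY hsl hns
  simp only [List.length_append, List.length_cons, List.length_nil] at hsl
  have key : ∃ s₀, s = s₀ ++ [d] ∧ s₀ <+ X ∧ s₀ <+ Y := by
    rcases sublist_concat_iff'.1 hsX with hX' | ⟨s₀, rfl, hs₀⟩
    · rcases sublist_concat_iff'.1 hsY with hY' | ⟨s₀, hs₀eq, hs₀⟩
      · exfalso
        have := hz (s ++ [d]) ((List.append_sublist_append_right _).2 hX')
          ((List.append_sublist_append_right _).2 hY')
          (by simp only [List.length_append, List.length_cons, List.length_nil]; omega)
        have hsZ : s = Z := List.append_cancel_right this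
        exact hns (hsZ ▸ List.sublist_append_left _ _)
      · refine ⟨s₀, hs₀eq, ?_, hs₀⟩
        have : s₀ <+ s := hs₀eq ▸ List.sublist_append_left _ _
        exact this.trans hX'
    · rcases sublist_concat_iff'.1 hsY with hY' | ⟨r, hreq, hr⟩
      · exact ⟨s₀, rfl, hs₀, (List.sublist_append_left _ _).trans hY'⟩
      · have : s₀ = r := List.append_cancel_right hreq
        exact ⟨s₀, rfl, hs₀, this ▸ hr⟩
  obtain ⟨s₀, rfl, hs₀X, hs₀Y⟩ := key
  have hns₀ : ¬ s₀ <+ Z := fun h => hns ((List.append_sublist_append_right _).2 h)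
  have hl₀ : s₀.length + 2 = X.length := by
    simp only [List.length_append, List.length_cons, List.length_nil] at hsl; omega
  rcases ht s₀ hs₀X hs₀Y hl₀ hns₀ with h | h
  · exact Or.inl (by rw [h])
  · exact Or.inr (by rw [h])

/-- The exceptional-words bound, full version with common prefix `u` and suffix `w`. -/
lemma exc_full (u w K : List Bool) (m₀ m₁ a c : Bool) (hm₀ : m₀ ≠ a) (hm₁ : m₁ ≠ c)
    (hz : ∀ t, t <+ u ++ [a] ++ (m₀ :: K ++ [m₁]) ++ w →
      t <+ u ++ (m₀ :: K ++ [m₁]) ++ [c] ++ w →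
      t.length + 1 = (u ++ [a] ++ (m₀ :: K ++ [m₁]) ++ w).length →
      t = u ++ (m₀ :: K ++ [m₁]) ++ w) :
    ∃ t₁ t₂, ∀ s, s <+ u ++ [a] ++ (m₀ :: K ++ [m₁]) ++ w →
      s <+ u ++ (m₀ :: K ++ [m₁]) ++ [c] ++ w →
      s.length + 2 = (u ++ [a] ++ (m₀ :: K ++ [m₁]) ++ w).length →
      ¬ s <+ u ++ (m₀ :: K ++ [m₁]) ++ w → s = t₁ ∨ s = t₂ := by
  induction u with
  | nil =>
    simp only [List.nil_append] at hz ⊢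
    -- induct on w from the right
    induction w using List.reverseRecOn with
    | nil =>
      simp only [List.append_nil] at hz ⊢
      have hz' : ∀ t, t <+ a :: m₀ :: K ++ [m₁] → t <+ (m₀ :: K ++ [m₁]) ++ [c] →
          t.length + 1 = K.length + 3 → t = m₀ :: K ++ [m₁] := by
        intro t h1 h2 h3
        apply hz t (by simpa using h1) (by simpa using h2)
        simp only [List.length_append, List.length_cons, List.length_nil]
        omega
      obtain ⟨t₁, t₂, ht⟩ := exc_core K m₀ m₁ a c hm₀ hm₁ hz'
      refine ⟨t₁, t₂, ?_⟩
      intro s h1 h2 h3 h4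
      apply ht s (by simpa using h1) (by simpa using h2) _ h4
      simp only [List.length_append, List.length_cons, List.length_nil] at h3 ⊢
      omega
    | append_singleton w' d ihw =>
      have e1 : [a] ++ (m₀ :: K ++ [m₁]) ++ (w' ++ [d])
          = ([a] ++ (m₀ :: K ++ [m₁]) ++ w') ++ [d] := by simp
      have e2 : (m₀ :: K ++ [m₁]) ++ [c] ++ (w' ++ [d])
          = ((m₀ :: K ++ [m₁]) ++ [c] ++ w') ++ [d] := by simp
      have e3 : (m₀ :: K ++ [m₁]) ++ (w' ++ [d]) = ((m₀ :: K ++ [m₁]) ++ w') ++ [d] := by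
        simp
      rw [e1, e2, e3] at hz ⊢
      exact strip_concat d _ _ _ (fun hzin => ihw hzin) hz
  | cons d u' ihu =>
    have e1 : (d :: u') ++ [a] ++ (m₀ :: K ++ [m₁]) ++ w
        = d :: (u' ++ [a] ++ (m₀ :: K ++ [m₁]) ++ w) := by simp
    have e2 : (d :: u') ++ (m₀ :: K ++ [m₁]) ++ [c] ++ w
        = d :: (u' ++ (m₀ :: K ++ [m₁]) ++ [c] ++ w) := by simp
    have e3 : (d :: u') ++ (m₀ :: K ++ [m₁]) ++ w
        = d :: (u' ++ (m₀ :: K ++ [m₁]) ++ w) := by simp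
    rw [e1, e2, e3] at hz ⊢
    exact strip_cons d _ _ _ (fun hzin => ihu hzin) hz

/-- One-sided main lemma. -/
lemma main_one (n : ℕ) (x y : List Bool)
    (hx : x.length = n) (hy : y.length = n) (hB : TypeBOne x y)
    (z : List Bool) (hz : deletionBall 1 x ∩ deletionBall 1 y = {z}) :
    ∃ T : Finset (List Bool), T.card ≤ 2 ∧ (∀ w ∈ T, w.length = n - 2) ∧
      deletionBall 2 x ∩ deletionBall 2 y = deletionBall 1 z ∪ ↑T := by
  classical
  obtain ⟨u, v, w, a, b, hx1, hy1⟩ := hB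
  have hX : x = u ++ [a] ++ ((!a) :: v ++ [b]) ++ w := by rw [hx1]; simp
  have hY : y = u ++ ((!a) :: v ++ [b]) ++ [!b] ++ w := by rw [hy1]; simp
  have hzimp : ∀ t, t ∈ deletionBall 1 x ∩ deletionBall 1 y → t = z := by
    intro t ht
    have : t ∈ ({z} : Set (List Bool)) := hz ▸ ht
    simpa using this
  have hzmem : z ∈ deletionBall 1 x ∩ deletionBall 1 y := by rw [hz]; rfl
  obtain ⟨⟨hzx, hzxl⟩, hzy, hzyl⟩ := hzmem
  have hZx : (u ++ ((!a) :: v ++ [b]) ++ w) <+ x := by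
    rw [hX]
    simp only [List.append_assoc]
    exact (List.append_sublist_append_left u).2 (List.sublist_cons_self _ _)
  have hZy : (u ++ ((!a) :: v ++ [b]) ++ w) <+ y := by
    rw [hY]
    simp only [List.append_assoc]
    refine (List.append_sublist_append_left u).2 ?_
    refine List.cons_sublist_cons.2 ?_
    refine (List.append_sublist_append_left v).2 ?_
    exact List.cons_sublist_cons.2 (List.sublist_cons_self _ _)
  have hxlen : x.length = u.length + 1 + (v.length + 2) + w.length := by
    rw [hX]
    simp only [List.length_append, List.length_cons, List.length_nil]
  have hZlen : (u ++ ((!a) :: v ++ [b]) ++ w).length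
      = u.length + (v.length + 2) + w.length := by
    simp only [List.length_append, List.length_cons, List.length_nil]
  have hzZ : z = u ++ ((!a) :: v ++ [b]) ++ w := by
    refine (hzimp _ ⟨⟨hZx, by omega⟩, hZy, ?_⟩).symm
    have h1 : y.length = n := hy
    have h2 : x.length = n := hx
    omega
  have hz' : ∀ t, t <+ u ++ [a] ++ ((!a) :: v ++ [b]) ++ w →
      t <+ u ++ ((!a) :: v ++ [b]) ++ [!b] ++ w →
      t.length + 1 = (u ++ [a] ++ ((!a) :: v ++ [b]) ++ w).length →
      t = u ++ ((!a) :: v ++ [b]) ++ w := by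
    intro t h1 h2 h3
    rw [← hX] at h1 h3
    rw [← hY] at h2
    have ht : t ∈ deletionBall 1 x ∩ deletionBall 1 y := by
      refine ⟨⟨h1, h3⟩, h2, ?_⟩
      have hxn : x.length = n := hx
      have hyn : y.length = n := hy
      omega
    rw [hzimp t ht, hzZ]
  obtain ⟨t₁, t₂, ht⟩ := exc_full u w v (!a) b a (!b) (by simp) (by simp) hz'
  refine ⟨({t₁, t₂} : Finset (List Bool)).filter
    (fun t => t <+ x ∧ t <+ y ∧ t.length + 2 = n ∧ ¬ t <+ z), ?_, ?_, ?_⟩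
  · refine (Finset.card_filter_le _ _).trans ?_
    refine (Finset.card_insert_le _ _).trans ?_
    simp
  · intro t htmem
    obtain ⟨-, -, -, h3, -⟩ := Finset.mem_filter.1 htmem
    omega
  · ext s
    simp only [Set.mem_inter_iff, deletionBall, Set.mem_setOf_eq, Set.mem_union,
      Finset.coe_filter, Finset.mem_insert, Finset.mem_singleton]
    constructor
    · rintro ⟨⟨hsx, hsxl⟩, hsy, hsyl⟩
      by_cases hsz : s <+ z
      · left
        refine ⟨hsz, ?_⟩
        have : x.length = n := hx
        omega
      · right
        have hs12 : s = t₁ ∨ s = t₂ := by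
          apply ht s (hX ▸ hsx) (hY ▸ hsy)
          · rw [← hX]; exact hsxl
          · rw [← hzZ]; exact hsz
        have : x.length = n := hx
        exact ⟨hs12, hsx, hsy, by omega, hsz⟩
    · rintro (⟨hsz, hszl⟩ | hsmem)
      · have h1 : s <+ x := hsz.trans hzx
        have h2 : s <+ y := hsz.trans hzy
        have h3 : x.length = n := hx
        have h4 : y.length = n := hy
        exact ⟨⟨h1, by omega⟩, h2, by omega⟩
      · obtain ⟨-, h1, h2, h3, -⟩ := hsmem
        have h5 : x.length = n := hx
        have h6 : y.length = n := hy
        exact ⟨⟨h1, by omega⟩, h2, by omega⟩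

theorem stmt15 (n : ℕ) (hn : 4 ≤ n) (x y : List Bool)
    (hx : x.length = n) (hy : y.length = n) (hB : TypeBConfusable x y)
    (z : List Bool) (hz : deletionBall 1 x ∩ deletionBall 1 y = {z}) :
    ∃ T : Finset (List Bool), T.card ≤ 2 ∧ (∀ w ∈ T, w.length = n - 2) ∧
      deletionBall 2 x ∩ deletionBall 2 y = deletionBall 1 z ∪ ↑T := by
  rcases hB with h | h
  · exact main_one n x y hx hy h z hz
  · obtain ⟨T, h1, h2, h3⟩ := main_one n y x hy hx h z (by rw [Set.inter_comm]; exact hz)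
    exact ⟨T, h1, h2, by rw [Set.inter_comm]; exact h3⟩
end

section
/- Let x and y be binary words of the same length that are Type-B-confusable, and suppose D_1(x) ∩ D_1(y) = {z} is a singleton. Then z is not an alternating word (i.e., z has two equal adjacent symbols). -/
/-- Two alternating boolean lists of equal length and equal head are equal. -/
lemma alt_eq : ∀ s t : List Bool, s.Chain' (· ≠ ·) → t.Chain' (· ≠ ·) →
    s.length = t.length → s.head? = t.head? → s = t
  | [], [], _, _, _, _ => rfl
  | [], _ :: _, _, _, hl, _ => by simp at hl
  | _ :: _, [], _, _, hl, _ => by simp at hl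
  | c :: s, d :: t, hs, ht, hl, hh => by
    simp only [List.head?_cons, Option.some.injEq] at hh
    subst hh
    have hl' : s.length = t.length := by simpa using hl
    have hh' : s.head? = t.head? := by
      match s, t, hl' with
      | [], [], _ => rfl
      | c' :: s, d' :: t, _ =>
        have h1 : c ≠ c' := (List.isChain_cons_cons.mp hs).1
        have h2 : c ≠ d' := (List.isChain_cons_cons.mp ht).1
        simp only [List.head?_cons, Option.some.injEq]
        cases c <;> cases c' <;> cases d' <;> simp_all
    rw [alt_eq s t hs.tail ht.tail hl' hh']

lemma key (x y z : List Bool) (hB : TypeBOne x y)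
    (hz : deletionBall 1 x ∩ deletionBall 1 y = {z}) :
    ¬ List.Chain' (· ≠ ·) z := by
  intro halt
  obtain ⟨u, v, w, a, b, hx0, hy0⟩ := hB
  have hx : x = u ++ (a :: (!a) :: (v ++ b :: w)) := by rw [hx0]; simp
  have hy : y = u ++ ((!a) :: (v ++ b :: (!b) :: w)) := by rw [hy0]; simp
  clear hx0 hy0
  set z1 : List Bool := u ++ ((!a) :: (v ++ b :: w)) with hz1def
  have hmem1 : z1 ∈ deletionBall 1 x ∩ deletionBall 1 y := by
    constructor
    · refine ⟨?_, by simp [hx, hz1def]; omega⟩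
      rw [hx]
      exact (List.sublist_cons_self a _).append_left u
    · refine ⟨?_, by simp [hy, hz1def]; omega⟩
      rw [hy]
      refine List.Sublist.append_left ?_ u
      exact ((((List.sublist_cons_self (!b) w).cons₂ b).append_left v).cons₂ (!a))
  rw [hz] at hmem1
  have hzz1 : z1 = z := hmem1
  rw [← hzz1] at halt
  have h2 : List.Chain' (· ≠ ·) ((!a) :: (v ++ b :: w)) :=
    (List.isChain_append.mp halt).2.1
  have hrel : ∀ q ∈ (v ++ b :: w).head?, (!a) ≠ q := (List.isChain_cons.mp h2).1
  have h3 : List.Chain' (· ≠ ·) (v ++ b :: w) := h2.tail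
  obtain ⟨hv, hbw, hlast⟩ := List.isChain_append.mp h3
  have ChA : List.Chain' (· ≠ ·) (v ++ [b, !b]) := by
    refine List.isChain_append.mpr ⟨hv, by simp, ?_⟩
    intro p hp q hq
    simp only [List.head?_cons, Option.mem_def, Option.some.injEq] at hq
    subst hq
    exact hlast p hp b (by simp)
  have ChB : List.Chain' (· ≠ ·) (a :: (!a) :: v) := by
    refine List.isChain_cons_cons.mpr ⟨by simp, List.isChain_cons.mpr ⟨?_, hv⟩⟩
    intro c hc
    apply hrel
    cases v with
    | nil => simp at hc
    | cons c' v' => simp_all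
  have hhead : (v ++ [b, !b]).head? = (a :: (!a) :: v).head? := by
    cases v with
    | nil =>
      have := hrel b (by simp)
      simp only [List.nil_append, List.head?_cons]
      cases a <;> cases b <;> simp_all
    | cons c' v' =>
      have := hrel c' (by simp)
      simp only [List.cons_append, List.head?_cons]
      cases a <;> cases c' <;> simp_all
  have E : v ++ [b, !b] = a :: (!a) :: v :=
    alt_eq _ _ ChA ChB (by simp) hhead
  set z2 : List Bool := u ++ (a :: (!a) :: (v ++ w)) with hz2def
  have hy' : y = u ++ ((!a) :: a :: (!a) :: (v ++ w)) := by
    rw [hy]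
    have h : v ++ b :: (!b) :: w = a :: (!a) :: (v ++ w) := by
      rw [show v ++ b :: (!b) :: w = (v ++ [b, !b]) ++ w by simp, E]; simp
    rw [h]
  have hmem2 : z2 ∈ deletionBall 1 x ∩ deletionBall 1 y := by
    constructor
    · refine ⟨?_, by simp [hx, hz2def]; omega⟩
      rw [hx]
      refine List.Sublist.append_left ?_ u
      exact (((List.sublist_cons_self b w).append_left v).cons₂ (!a)).cons₂ a
    · refine ⟨?_, by simp [hy, hz2def]; omega⟩
      rw [hy']
      exact (List.sublist_cons_self (!a) _).append_left u
  rw [hz] at hmem2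
  have hzz2 : z2 = z := hmem2
  have heq : z2 = z1 := by rw [hzz1, hzz2]
  rw [hz1def, hz2def] at heq
  have := List.append_cancel_left heq
  simp at this

/-- If `x` and `y` are Type-B-confusable with `D_1(x) ∩ D_1(y) = {z}`, then `z`
is not alternating. -/
theorem stmt16 (x y : List Bool) (hlen : x.length = y.length)
    (hB : TypeBConfusable x y) (z : List Bool)
    (hz : deletionBall 1 x ∩ deletionBall 1 y = {z}) :
    ¬ List.Chain' (· ≠ ·) z := by
  rcases hB with h | h
  · exact key x y z h hz
  · exact key y x z h (by rw [Set.inter_comm]; exact hz)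
end

section
/- Let P ≥ 1 and let z be a binary word of length n ≥ 1 in which every alternating contiguous substring (a contiguous substring with all adjacent symbols distinct) has length at most P. Then the number of runs of z (maximal constant contiguous substrings) is at most n − ⌈n/P⌉ + 1; consequently |D_1(z)| ≤ n − ⌈n/P⌉ + 1. -/
/-- Number of adjacent equal pairs ("stutters") in a list. -/
def stut : List Bool → ℕ
  | [] => 0
  | [_] => 0
  | a :: b :: l => (if a = b then 1 else 0) + stut (b :: l)

lemma stut_le_cons (a : Bool) (l : List Bool) : stut l ≤ stut (a :: l) := by
  cases l with
  | nil => simp [stut]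
  | cons b t =>
    show stut (b :: t) ≤ (if a = b then 1 else 0) + stut (b :: t)
    split <;> omega

lemma stut_append_le (x y : List Bool) : stut y ≤ stut (x ++ y) := by
  induction x with
  | nil => simp
  | cons a x ih => exact le_trans ih (stut_le_cons a (x ++ y))

lemma stut_destutter' : ∀ (l : List Bool) (a : Bool),
    (List.destutter' (· ≠ ·) a l).length + stut (a :: l) = l.length + 1 := by
  intro l
  induction l with
  | nil => intro a; simp [List.destutter', stut]
  | cons b t ih =>
    intro a
    by_cases hab : a = b
    · rw [List.destutter'_cons_neg t (by simp [hab])]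
      have := ih b
      simp only [stut, if_pos hab]
      subst hab
      simp only [List.length_cons]
      omega
    · rw [List.destutter'_cons_pos t (by simpa using hab)]
      have := ih b
      simp only [stut, if_neg hab, List.length_cons]
      omega

lemma main_stut (P : ℕ) (hP : 1 ≤ P) :
    ∀ (N : ℕ) (z : List Bool), z.length ≤ N →
      (∀ w : List Bool, w <:+: z → List.Chain' (· ≠ ·) w → w.length ≤ P) →
      z.length ≤ (stut z + 1) * P := by
  intro N
  induction N with
  | zero => intro z hz _; omega
  | succ N ih =>
    intro z hz halt
    by_cases hle : z.length ≤ P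
    · calc z.length ≤ 1 * P := by omega
        _ ≤ (stut z + 1) * P := Nat.mul_le_mul_right P (by omega)
    · push_neg at hle
      set w := z.take (P + 1) with hw
      have hwlen : w.length = P + 1 := by
        simp [hw, List.length_take]; omega
      have hwinf : w <:+: z := (z.take_prefix (P+1)).isInfix
      have hnc : ¬ List.Chain' (· ≠ ·) w := by
        intro hc
        have := halt w hwinf hc
        omega
      unfold List.Chain' at hnc; rw [List.isChain_iff_getElem] at hnc
      push_neg at hnc
      obtain ⟨i, hi, hne⟩ := hnc
      rw [hwlen] at hi
      have hi1 : i + 1 < z.length := by omega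
      have hi0 : i < z.length := by omega
      have hgz : z[i] = z[i+1] := by
        have h1 : w.get ⟨i, by omega⟩ = z[i] := by
          simp [hw, List.getElem_take]
        have h2 : w.get ⟨i+1, by omega⟩ = z[i+1] := by
          simp [hw, List.getElem_take]
        rw [List.get_eq_getElem] at h1 h2; rw [h1, h2] at hne; exact hne
      set y := z.drop (i + 1) with hy
      have hylen : y.length = z.length - (i + 1) := by simp [hy]
      have hdropi : z.drop i = z[i] :: z[i+1] :: z.drop (i + 2) := by
        rw [List.drop_eq_getElem_cons hi0, List.drop_eq_getElem_cons hi1]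
      have hy2 : y = z[i+1] :: z.drop (i + 2) := by
        rw [hy, List.drop_eq_getElem_cons hi1]
      have hstut1 : stut (z.drop i) = 1 + stut y := by
        rw [hdropi, hy2]
        show (if z[i] = z[i+1] then 1 else 0) + stut (z[i+1] :: z.drop (i+2))
          = 1 + stut (z[i+1] :: z.drop (i+2))
        rw [if_pos hgz]
      have hstut2 : 1 + stut y ≤ stut z := by
        rw [← hstut1]
        calc stut (z.drop i) ≤ stut (z.take i ++ z.drop i) := stut_append_le _ _
          _ = stut z := by rw [List.take_append_drop]
      have hyN : y.length ≤ N := by omega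
      have hyhalt : ∀ v : List Bool, v <:+: y → List.Chain' (· ≠ ·) v → v.length ≤ P := by
        intro v hv hc
        exact halt v (hv.trans (z.drop_suffix (i+1)).isInfix) hc
      have hymain := ih y hyN hyhalt
      have : z.length = (i + 1) + y.length := by omega
      calc z.length = (i+1) + y.length := this
        _ ≤ P + (stut y + 1) * P := by
            have : i + 1 ≤ P := by omega
            omega
        _ = (stut y + 2) * P := by ring
        _ ≤ (stut z + 1) * P := Nat.mul_le_mul_right P (by omega)

lemma deletionBall_finite (l : List Bool) : (deletionBall 1 l).Finite := by
  apply Set.Finite.subset (l.sublists.toFinset.finite_toSet)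
  intro w hw
  simp only [List.coe_toFinset, Set.mem_setOf_eq, List.mem_sublists]
  exact hw.1

lemma deletionBall_cons (a : Bool) (l : List Bool) :
    deletionBall 1 (a :: l) = insert l ((a :: ·) '' deletionBall 1 l) := by
  ext w
  simp only [deletionBall, Set.mem_setOf_eq, Set.mem_insert_iff, Set.mem_image]
  constructor
  · rintro ⟨hsub, hlen⟩
    rcases List.sublist_cons_iff.mp hsub with h | ⟨r, hr, hrs⟩
    · left
      exact h.eq_of_length (by simpa using hlen)
    · right
      exact ⟨r, ⟨hrs, by subst hr; simpa using hlen⟩, hr.symm⟩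
  · rintro (rfl | ⟨r, ⟨hrs, hrl⟩, rfl⟩)
    · exact ⟨List.sublist_cons_self _ _, by simp⟩
    · exact ⟨List.cons_sublist_cons.mpr hrs, by simpa using hrl⟩

lemma ball_le_destutter : ∀ (l : List Bool) (a : Bool),
    (deletionBall 1 (a :: l)).ncard ≤ (List.destutter (· ≠ ·) (a :: l)).length := by
  intro l
  induction l with
  | nil =>
    intro a
    have : deletionBall 1 [a] = {([] : List Bool)} := by
      ext w
      simp only [deletionBall, Set.mem_setOf_eq, Set.mem_singleton_iff]
      constructor
      · rintro ⟨hs, hl⟩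
        exact List.length_eq_zero_iff.mp (by simpa using hl)
      · rintro rfl; simp
    rw [this]
    simp [List.destutter]
  | cons b t ih =>
    intro a
    rw [deletionBall_cons]
    by_cases hab : a = b
    · have hmem : (b :: t) ∈ ((a :: ·) '' deletionBall 1 (b :: t)) := by
        refine ⟨t, ⟨List.sublist_cons_self b t, by simp⟩, by rw [hab]⟩
      rw [Set.insert_eq_self.mpr hmem,
        Set.ncard_image_of_injective _ List.cons_injective]
      have hd : List.destutter (· ≠ ·) (a :: b :: t) = List.destutter (· ≠ ·) (b :: t) := by
        rw [List.destutter_cons', List.destutter_cons',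
          List.destutter'_cons_neg t (by simp [hab])]
        subst hab; rfl
      rw [hd]
      exact ih b
    · calc (insert (b :: t) ((a :: ·) '' deletionBall 1 (b :: t))).ncard
          ≤ ((a :: ·) '' deletionBall 1 (b :: t)).ncard + 1 :=
            Set.ncard_insert_le _ _
        _ = (deletionBall 1 (b :: t)).ncard + 1 := by
            rw [Set.ncard_image_of_injective _ List.cons_injective]
        _ ≤ (List.destutter (· ≠ ·) (b :: t)).length + 1 := by
            have := ih b; omega
        _ = (List.destutter (· ≠ ·) (a :: b :: t)).length := by
            rw [List.destutter_cons', List.destutter_cons',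
              List.destutter'_cons_pos t (by simpa using hab)]
            simp

/-- If every alternating contiguous substring of `z` (length-`n` word, `n ≥ 1`)
has length at most `P`, then the number of runs of `z` is at most
`n − ⌈n/P⌉ + 1`, and consequently `|D_1(z)| ≤ n − ⌈n/P⌉ + 1`.
The number of runs of `z` is the length of `z.destutter (· ≠ ·)`, and
`⌈n/P⌉ = (n + P - 1) / P` in natural-number division. -/
theorem stmt17 (n P : ℕ) (hn : 1 ≤ n) (hP : 1 ≤ P)
    (z : List Bool) (hz : z.length = n)
    (halt : ∀ w : List Bool, w <:+: z → List.Chain' (· ≠ ·) w → w.length ≤ P) :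
    (z.destutter (· ≠ ·)).length ≤ n - (n + P - 1) / P + 1 ∧
    (deletionBall 1 z).ncard ≤ n - (n + P - 1) / P + 1 := by
  have hmain := main_stut P hP z.length z le_rfl halt
  obtain ⟨a, l, rfl⟩ : ∃ a l, z = a :: l := by
    cases z with
    | nil => simp at hz; omega
    | cons a l => exact ⟨a, l, rfl⟩
  have hrs : (List.destutter (· ≠ ·) (a :: l)).length + stut (a :: l) = n := by
    rw [List.destutter_cons']
    have := stut_destutter' l a
    simp only [List.length_cons] at hz
    omega
  set s := stut (a :: l) with hs
  set r := (List.destutter (· ≠ ·) (a :: l)).length with hr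
  have hnP : n ≤ (s + 1) * P := by rw [← hz]; exact hmain
  have hdiv : (n + P - 1) / P ≤ s + 1 := by
    have h2 : n + P - 1 < (s + 2) * P := by
      have : (s + 2) * P = (s + 1) * P + P := by ring
      omega
    have := (Nat.div_lt_iff_lt_mul (show 0 < P by omega)).mpr h2
    omega
  have h1 : r ≤ n - (n + P - 1) / P + 1 := by omega
  exact ⟨h1, le_trans (ball_le_destutter l a) h1⟩
end
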